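/- Assume ν ≥ 2. Let τ : Σ → Σ be a bijection with τ(Σ₂) = Σ₂ and τ(w_{2k−1}) = w_{2k}, τ(w_{2k}) = w_{2k−1} for all 1 ≤ k ≤ 2^{ν−1}, and let T : G(Σ, e) → G(Σ, e) be the automorphism determined by T(Ψ_s) = Ψ_{τ(s)}. Define u_{2k−1} := Ψ_{w_{2k−1}} − Ψ_w and u_{2k} := Ψ_{w_{2k−1}} + Ψ_{w_{2k}} − Ψ_w − Ψ_{w'} for 1 ≤ k ≤ 2^{ν−1} − 2, and u_{2^ν−3} := Ψ_{w_{2^ν−3}} − Ψ_w, u_{2^ν−2} := Ψ_{w_{2^ν−3}} − Ψ_{w_{2^ν−2}}. Then: T(Ψ_w) = (1 + m)·Ψ_w + Σ_{i=1}^{2^{ν−1}−1} u_{2i}; T(u_{2k−1}) = u_{2k−1} + u_{2k} and T(u_{2k}) = u_{2k} for 1 ≤ k ≤ 2^{ν−1} − 2; T(u_{2^ν−3}) = m·Ψ_w + u_{2^ν−3} + Σ_{i=1}^{2^{ν−1}−2} u_{2i}; and T(u_{2^ν−2}) = u_{2^ν−2}. -/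

import Mathlib

/-- The subgroup of relations: `e s • ψ s - e t • ψ t` for all `s t`, together with
`∑ s, ψ s`. -/
noncomputable def relSub {S : Type*} [Fintype S] (e : S → ℤ) : AddSubgroup (S →₀ ℤ) :=
  AddSubgroup.closure
    ({x | ∃ s t : S, x = Finsupp.single s (e s) - Finsupp.single t (e t)} ∪
      {∑ s : S, Finsupp.single s 1})

/-- `G(Σ, e)`: the quotient of the free abelian group on `Σ` by the relations. -/
abbrev CompGrp {S : Type*} [Fintype S] (e : S → ℤ) : Type _ :=
  (S →₀ ℤ) ⧸ relSub e

/-- `Ψ s`: the image of the basis element `ψ s` in `G(Σ, e)`. -/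
noncomputable def Psi {S : Type*} [Fintype S] (e : S → ℤ) (s : S) : CompGrp e :=
  QuotientAddGroup.mk (Finsupp.single s 1)

/-- `Σ = Σ₂ ⊔ Σ₄` with `#Σ₂ = s₂` and `#Σ₄ = 2^ν`. -/
abbrev Sig3 (s₂ ν : ℕ) : Type := Fin s₂ ⊕ Fin (2 ^ ν)

/-- `e ≡ 1` on `Σ₂` and `e ≡ 2` on `Σ₄`. -/
def e3 (s₂ ν : ℕ) : Sig3 s₂ ν → ℤ := Sum.elim (fun _ => 1) (fun _ => 2)

/-- `w i` (`1`-based): the `i`-th point of `Σ₄ = {w_1, …, w_{2^ν}}`. -/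
def wPt (s₂ ν : ℕ) (i : ℕ) : Sig3 s₂ ν :=
  Sum.inr ⟨(i - 1) % 2 ^ ν, Nat.mod_lt _ (by positivity)⟩

/-- The generators `u_j` (`1`-based, `u_0 := Ψ w` with `w = w_{2^ν - 1}`):
for `1 ≤ k ≤ 2^{ν-1} - 2`, `u_{2k-1} = Ψ w_{2k-1} - Ψ w` and
`u_{2k} = Ψ w_{2k-1} + Ψ w_{2k} - Ψ w - Ψ w'` (with `w' = w_{2^ν}`); and
`u_{2^ν-3} = Ψ w_{2^ν-3} - Ψ w` (the odd-index formula again),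
`u_{2^ν-2} = Ψ w_{2^ν-3} - Ψ w_{2^ν-2}`. -/
noncomputable def uGen (s₂ ν : ℕ) : ℕ → CompGrp (e3 s₂ ν) := fun j =>
  if j = 0 then Psi (e3 s₂ ν) (wPt s₂ ν (2 ^ ν - 1))
  else if j = 2 ^ ν - 2 then
    Psi (e3 s₂ ν) (wPt s₂ ν (2 ^ ν - 3)) - Psi (e3 s₂ ν) (wPt s₂ ν (2 ^ ν - 2))
  else if j % 2 = 1 then
    Psi (e3 s₂ ν) (wPt s₂ ν j) - Psi (e3 s₂ ν) (wPt s₂ ν (2 ^ ν - 1))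
  else
    Psi (e3 s₂ ν) (wPt s₂ ν (j - 1)) + Psi (e3 s₂ ν) (wPt s₂ ν j)
      - Psi (e3 s₂ ν) (wPt s₂ ν (2 ^ ν - 1)) - Psi (e3 s₂ ν) (wPt s₂ ν (2 ^ ν))

lemma relPsi {S : Type*} [Fintype S] (e : S → ℤ) (s t : S) :
    e s • Psi e s = e t • Psi e t := by
  unfold Psi
  rw [← QuotientAddGroup.mk_zsmul, ← QuotientAddGroup.mk_zsmul, QuotientAddGroup.eq]
  have h : -(e s • Finsupp.single s (1:ℤ)) + e t • Finsupp.single t (1:ℤ)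
      = -(Finsupp.single s (e s) - Finsupp.single t (e t)) := by
    rw [Finsupp.smul_single, Finsupp.smul_single]
    simp; abel
  rw [h]
  exact neg_mem (AddSubgroup.subset_closure (Or.inl ⟨s, t, rfl⟩))

lemma sumPsi {S : Type*} [Fintype S] (e : S → ℤ) :
    ∑ s : S, Psi e s = 0 := by
  have : ∑ s : S, Psi e s
      = QuotientAddGroup.mk' (relSub e) (∑ s : S, Finsupp.single s 1) := by
    rw [map_sum]; rfl
  rw [this]
  exact (QuotientAddGroup.eq_zero_iff _).mpr (AddSubgroup.subset_closure (Or.inr rfl))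

lemma pairSum {M : Type*} [AddCommMonoid M] (g : ℕ → M) :
    ∀ c : ℕ, ∑ i ∈ Finset.Icc 1 c, (g (2*i-1) + g (2*i)) = ∑ j ∈ Finset.range (2*c), g (j+1)
  | 0 => by simp
  | (c+1) => by
    rw [Finset.sum_Icc_succ_top (by omega), pairSum g c,
      show 2*(c+1) = (2*c+1)+1 by ring, Finset.sum_range_succ, Finset.sum_range_succ,
      show 2*c+1+1-1 = 2*c+1 by omega]
    abel

/-- for `ν ≥ 2`, if `τ : Σ ≃ Σ` preserves `Σ₂` and swaps
`w_{2k-1} ↔ w_{2k}` for all `1 ≤ k ≤ 2^{ν-1}`, and `T` is the endomorphism of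
`G(Σ, e)` determined by `T (Ψ s) = Ψ (τ s)`, then (with `m = 2s₂ + 2^ν`):
`T (Ψ w) = (1 + m) • Ψ w + ∑_{i=1}^{2^{ν-1}-1} u_{2i}`;
`T u_{2k-1} = u_{2k-1} + u_{2k}` and `T u_{2k} = u_{2k}` for `1 ≤ k ≤ 2^{ν-1} - 2`;
`T u_{2^ν-3} = m • Ψ w + u_{2^ν-3} + ∑_{i=1}^{2^{ν-1}-2} u_{2i}`; and
`T u_{2^ν-2} = u_{2^ν-2}`. -/
theorem stmt8 (s₂ ν : ℕ) (hν : 2 ≤ ν)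
    (τ : Sig3 s₂ ν ≃ Sig3 s₂ ν)
    (hτ2 : ∀ x : Fin s₂, ∃ y : Fin s₂, τ (Sum.inl x) = Sum.inl y)
    (hτ4 : ∀ k : ℕ, 1 ≤ k → k ≤ 2 ^ (ν - 1) →
      τ (wPt s₂ ν (2 * k - 1)) = wPt s₂ ν (2 * k) ∧
      τ (wPt s₂ ν (2 * k)) = wPt s₂ ν (2 * k - 1))
    (T : CompGrp (e3 s₂ ν) →+ CompGrp (e3 s₂ ν))
    (hT : ∀ s : Sig3 s₂ ν, T (Psi (e3 s₂ ν) s) = Psi (e3 s₂ ν) (τ s)) :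
    T (uGen s₂ ν 0) = (1 + (2 * s₂ + 2 ^ ν)) • uGen s₂ ν 0 +
      ∑ i ∈ Finset.Icc 1 (2 ^ (ν - 1) - 1), uGen s₂ ν (2 * i) ∧
    (∀ k : ℕ, 1 ≤ k → k ≤ 2 ^ (ν - 1) - 2 →
      T (uGen s₂ ν (2 * k - 1)) = uGen s₂ ν (2 * k - 1) + uGen s₂ ν (2 * k) ∧
      T (uGen s₂ ν (2 * k)) = uGen s₂ ν (2 * k)) ∧
    T (uGen s₂ ν (2 ^ ν - 3)) = (2 * s₂ + 2 ^ ν) • uGen s₂ ν 0 +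
      uGen s₂ ν (2 ^ ν - 3) + ∑ i ∈ Finset.Icc 1 (2 ^ (ν - 1) - 2), uGen s₂ ν (2 * i) ∧
    T (uGen s₂ ν (2 ^ ν - 2)) = uGen s₂ ν (2 ^ ν - 2) := by
  obtain ⟨F, hF⟩ : ∃ F, 2^(ν-2) = F + 1 :=
    ⟨2^(ν-2)-1, by have := Nat.one_le_two_pow (n := ν-2); omega⟩
  have hpow : 2^ν = 4*F+4 := by rw [show ν = (ν-2)+2 by omega, pow_add, hF]; ring
  have hpow1 : 2^(ν-1) = 2*F+2 := by rw [show ν-1 = (ν-2)+1 by omega, pow_succ, hF]; ring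
  set W : ℕ → CompGrp (e3 s₂ ν) := fun i => Psi (e3 s₂ ν) (wPt s₂ ν i) with hW
  -- 2-torsion relation
  have hz : ∀ i j : ℕ, (2:ℤ) • W i = (2:ℤ) • W j :=
    fun i j => relPsi (e3 s₂ ν) (wPt s₂ ν i) (wPt s₂ ν j)
  -- action of T on the W's
  have hTW : ∀ k, 1 ≤ k → k ≤ 2*F+2 → T (W (2*k-1)) = W (2*k) ∧ T (W (2*k)) = W (2*k-1) := by
    intro k h1 h2
    have h := hτ4 k h1 (by omega)
    constructor
    · simp only [hW]; rw [hT, h.1]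
    · simp only [hW]; rw [hT, h.2]
  have hTw : T (W (4*F+3)) = W (4*F+4) := by
    have := (hTW (2*F+2) (by omega) (by omega)).1
    rw [show 2*(2*F+2)-1 = 4*F+3 by omega, show 2*(2*F+2) = 4*F+4 by omega] at this
    exact this
  have hTw' : T (W (4*F+4)) = W (4*F+3) := by
    have := (hTW (2*F+2) (by omega) (by omega)).2
    rw [show 2*(2*F+2)-1 = 4*F+3 by omega, show 2*(2*F+2) = 4*F+4 by omega] at this
    exact this
  have hT1 : T (W (4*F+1)) = W (4*F+2) := by
    have := (hTW (2*F+1) (by omega) (by omega)).1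
    rw [show 2*(2*F+1)-1 = 4*F+1 by omega, show 2*(2*F+1) = 4*F+2 by omega] at this
    exact this
  have hT2 : T (W (4*F+2)) = W (4*F+1) := by
    have := (hTW (2*F+1) (by omega) (by omega)).2
    rw [show 2*(2*F+1)-1 = 4*F+1 by omega, show 2*(2*F+1) = 4*F+2 by omega] at this
    exact this
  -- unfolding the generators
  have hwEq : ∀ {a b : ℕ}, a = b → wPt s₂ ν a = wPt s₂ ν b := fun h => by rw [h]
  have e1 : 2^ν - 1 = 4*F+3 := by rw [hpow]; omega
  have e2 : 2^ν - 2 = 4*F+2 := by rw [hpow]; omega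
  have e3' : 2^ν - 3 = 4*F+1 := by rw [hpow]; omega
  have hu0 : uGen s₂ ν 0 = W (4*F+3) := by
    rw [show uGen s₂ ν 0 = Psi (e3 s₂ ν) (wPt s₂ ν (2^ν-1)) from rfl, hwEq e1]
  have huOdd : ∀ k, 1 ≤ k → k ≤ 2*F+1 → uGen s₂ ν (2*k-1) = W (2*k-1) - W (4*F+3) := by
    intro k h1 h2
    simp only [uGen]
    rw [if_neg (by omega), if_neg (by rw [e2]; omega), if_pos (by omega), hwEq e1]
  have huEven : ∀ k, 1 ≤ k → k ≤ 2*F →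
      uGen s₂ ν (2*k) = (W (2*k-1) + W (2*k)) - (W (4*F+3) + W (4*F+4)) := by
    intro k h1 h2
    simp only [uGen]
    rw [if_neg (by omega), if_neg (by rw [e2]; omega), if_neg (by omega), hwEq e1,
      hwEq hpow]
    show W (2*k-1) + W (2*k) - W (4*F+3) - W (4*F+4) = _
    abel
  have huLast : uGen s₂ ν (4*F+2) = W (4*F+1) - W (4*F+2) := by
    simp only [uGen]
    rw [if_neg (by omega), if_pos e2.symm, hwEq e3', hwEq e2]
  -- global sum relation
  have hSig : ∀ b : Fin (2^ν), Psi (e3 s₂ ν) (Sum.inr b) = W (b.val + 1) := by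
    intro b
    simp only [hW]
    congr 1
    simp [wPt, Nat.mod_eq_of_lt b.isLt]
  have hB : s₂ • ((2:ℤ) • W (4*F+3)) + ∑ j ∈ Finset.range (4*F+4), W (j+1) = 0 := by
    have h0 := sumPsi (e3 s₂ ν)
    rw [Fintype.sum_sum_type] at h0
    have h1 : ∀ x : Fin s₂, Psi (e3 s₂ ν) (Sum.inl x) = (2:ℤ) • W (4*F+3) := by
      intro x
      have h := relPsi (e3 s₂ ν) (Sum.inl x) (wPt s₂ ν (4*F+3))
      have he : e3 s₂ ν (Sum.inl x) = 1 := rfl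
      have he' : e3 s₂ ν (wPt s₂ ν (4*F+3)) = 2 := rfl
      rw [he, he', one_smul] at h
      exact h
    have h2 : ∑ x : Fin s₂, Psi (e3 s₂ ν) (Sum.inl x) = s₂ • ((2:ℤ) • W (4*F+3)) := by
      rw [Finset.sum_congr rfl (fun x _ => h1 x), Finset.sum_const, Finset.card_univ,
        Fintype.card_fin]
    have h3 : ∑ b : Fin (2^ν), Psi (e3 s₂ ν) (Sum.inr b)
        = ∑ j ∈ Finset.range (4*F+4), W (j+1) := by
      rw [Finset.sum_congr rfl (fun b _ => hSig b), ← hpow]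
      exact Fin.sum_univ_eq_sum_range (fun j => W (j+1)) (2^ν)
    rw [h2, h3] at h0
    exact h0
  have hrange : ∑ j ∈ Finset.range (4*F+4), W (j+1)
      = ∑ j ∈ Finset.range (4*F), W (j+1) + W (4*F+1) + W (4*F+2) + W (4*F+3) + W (4*F+4) := by
    rw [show 4*F+4 = (4*F+3)+1 by ring, Finset.sum_range_succ,
        show 4*F+3 = (4*F+2)+1 by ring, Finset.sum_range_succ,
        show 4*F+2 = (4*F+1)+1 by ring, Finset.sum_range_succ,
        show 4*F+1 = (4*F)+1 by ring, Finset.sum_range_succ]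
  have hB' : s₂ • ((2:ℤ) • W (4*F+3)) + (∑ j ∈ Finset.range (4*F), W (j+1)
      + W (4*F+1) + W (4*F+2) + W (4*F+3) + W (4*F+4)) = 0 := by
    rw [← hrange]; exact hB
  have hS : ∑ i ∈ Finset.Icc 1 (2*F), uGen s₂ ν (2*i)
      = ∑ j ∈ Finset.range (4*F), W (j+1) - (2*F) • (W (4*F+3) + W (4*F+4)) := by
    rw [Finset.sum_congr rfl
      (fun i hi => huEven i (Finset.mem_Icc.mp hi).1 (Finset.mem_Icc.mp hi).2),
      Finset.sum_sub_distrib, Finset.sum_const, Nat.card_Icc, pairSum,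
      show 2*(2*F) = 4*F by ring]
    norm_num
  refine ⟨?_, ?_, ?_, ?_⟩
  · rw [hu0, show 2*s₂ + 2^ν = 2*s₂+(4*F+4) by rw [hpow],
      show 2^(ν-1)-1 = 2*F+1 by rw [hpow1]; omega, hTw,
      Finset.sum_Icc_succ_top (show 1 ≤ 2*F+1 by omega), show 2*(2*F+1) = 4*F+2 by ring,
      huLast, hS]
    linear_combination (norm := module) (-1:ℤ) • hB' + hz (4*F+2) (4*F+3)
      + ((F:ℤ)+1) • hz (4*F+4) (4*F+3)
  · intro k hk1 hk2
    rw [hpow1] at hk2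
    have hk2' : k ≤ 2*F := by omega
    constructor
    · rw [huOdd k hk1 (by omega), map_sub, (hTW k hk1 (by omega)).1, hTw,
        huEven k hk1 hk2']
      linear_combination (norm := module) hz (4*F+3) (2*k-1)
    · rw [huEven k hk1 hk2', map_sub, map_add, map_add, (hTW k hk1 (by omega)).1,
        (hTW k hk1 (by omega)).2, hTw, hTw']
      abel
  · rw [e3', show 2*s₂ + 2^ν = 2*s₂+(4*F+4) by rw [hpow],
      show 2^(ν-1)-2 = 2*F by rw [hpow1]; omega, hu0]
    have hu3 : uGen s₂ ν (4*F+1) = W (4*F+1) - W (4*F+3) := by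
      have := huOdd (2*F+1) (by omega) (by omega)
      rw [show 2*(2*F+1)-1 = 4*F+1 by omega] at this
      exact this
    rw [hu3, map_sub, hT1, hTw, hS]
    linear_combination (norm := module) (-1:ℤ) • hB' + hz (4*F+2) (4*F+3)
      + (F:ℤ) • hz (4*F+4) (4*F+3)
  · rw [e2, huLast, map_sub, hT1, hT2]
    linear_combination (norm := module) hz (4*F+2) (4*F+1)
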